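/- Let k ≥ 3 be an integer. Every non boolean facet defining inequality of Q(C_{2k}^k) with positive integer coefficients is of the form a^0·(2∑_{i∈W} x_i + ∑_{i∉W} x_i) ≥ 3a^0 for some integer a^0 ≥ 1 and some W ⊆ Z_{2k} satisfying |W ∩ x^j| = 1 and |C^j ∩ (Z_{2k} ∖ W)| ≥ 2 for every j ∈ Z_{2k}; that is, it is a minor inequality corresponding to a circulant minor defined by such a W. -/

import Mathlib

/-- `Cseg n k i` is the set `C^i = {i, i+1, …, i+k−1} ⊆ ℤ_n`. -/
def Cseg (n k : ℕ) (i : ZMod n) : Finset (ZMod n) :=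
  (Finset.range k).image fun h : ℕ => i + (h : ZMod n)

/-- A cover of the circulant matrix `C_n^k`. -/
def IsCover (n k : ℕ) (x : Finset (ZMod n)) : Prop :=
  ∀ i : ZMod n, (x ∩ Cseg n k i).Nonempty

/-- A minimal cover of `C_n^k`. -/
def IsMinimalCover (n k : ℕ) (x : Finset (ZMod n)) : Prop :=
  IsCover n k x ∧ ∀ y : Finset (ZMod n), y ⊂ x → ¬ IsCover n k y

/-- The covering number `τ(C_n^k)`. -/
noncomputable def coveringNumber (n k : ℕ) : ℕ :=
  sInf {m : ℕ | ∃ x : Finset (ZMod n), IsCover n k x ∧ x.card = m}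

/-- A minimum cover of `C_n^k`. -/
noncomputable def IsMinimumCover (n k : ℕ) (x : Finset (ZMod n)) : Prop :=
  IsCover n k x ∧ x.card = coveringNumber n k

/-- `xcov n k i` is the cover `x^i = {i + h·k : 0 ≤ h ≤ ⌈n/k⌉ − 1}`. -/
def xcov (n k : ℕ) (i : ZMod n) : Finset (ZMod n) :=
  (Finset.range ((n + k - 1) / k)).image fun h : ℕ => i + ((h * k : ℕ) : ZMod n)

/-- The cyclic closed interval `[a,b]_n` of `ℤ_n`. -/
def cycInterval (n : ℕ) (a b : ZMod n) : Finset (ZMod n) :=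
  (Finset.range ((b - a).val + 1)).image fun h : ℕ => a + (h : ZMod n)

/-- The inequality `a·x ≥ α` is valid for `Q(C_n^k)`. -/
def IsValid (n k : ℕ) (a : ZMod n → ℤ) (α : ℤ) : Prop :=
  ∀ x : Finset (ZMod n), IsCover n k x → α ≤ ∑ i ∈ x, a i

/-- A root of a valid inequality: a cover satisfying it with equality. -/
def IsRoot (n k : ℕ) (a : ZMod n → ℤ) (α : ℤ) (x : Finset (ZMod n)) : Prop :=
  IsCover n k x ∧ ∑ i ∈ x, a i = α

/-- Characteristic vector of a subset of `ℤ_n`. -/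
noncomputable def charVec (n : ℕ) (x : Finset (ZMod n)) : ZMod n → ℝ :=
  fun i => if i ∈ x then 1 else 0

/-- `a·x ≥ α` is facet defining for `Q(C_n^k)`: it is valid, and the characteristic
vectors of its roots affinely span an `(n−1)`-dimensional affine subspace of `ℝ^n`. -/
def IsFacet (n k : ℕ) (a : ZMod n → ℤ) (α : ℤ) : Prop :=
  IsValid n k a α ∧
    Module.finrank ℝ
      (affineSpan ℝ
        {v : ZMod n → ℝ | ∃ x : Finset (ZMod n), IsRoot n k a α x ∧ v = charVec n x}).direction
      = n - 1

/-- `a·x ≥ α` is a positive multiple of one of the boolean inequalities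
`x_i ≥ 0`, `−x_i ≥ −1`, `∑_{j ∈ C^i} x_j ≥ 1`. -/
def IsBooleanMultiple (n k : ℕ) (a : ZMod n → ℤ) (α : ℤ) : Prop :=
  ∃ c : ℤ, 0 < c ∧
    ( (∃ i : ZMod n, (∀ j, a j = if j = i then c else 0) ∧ α = 0)
    ∨ (∃ i : ZMod n, (∀ j, a j = if j = i then -c else 0) ∧ α = -c)
    ∨ (∃ i : ZMod n, (∀ j, a j = if j ∈ Cseg n k i then c else 0) ∧ α = c) )

/-- `a·x ≥ α` is a positive multiple of the rank constraint `∑ x_i ≥ ⌈n/k⌉`. -/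
def IsRankMultiple (n k : ℕ) (a : ZMod n → ℤ) (α : ℤ) : Prop :=
  ∃ c : ℤ, 0 < c ∧ (∀ j, a j = c) ∧ α = c * (((n + k - 1) / k : ℕ) : ℤ)

/-! ### Auxiliary machinery -/

namespace Stmt13Aux
set_option linter.unusedSectionVars false

section ZModLemmas

variable {k : ℕ} (hk : 3 ≤ k)

lemma nz (hk : 3 ≤ k) : NeZero (2 * k) := ⟨by omega⟩

variable [NeZero (2 * k)]

lemma two_k_pos : 0 < 2 * k := Nat.pos_of_ne_zero (NeZero.ne _)

lemma zval_lt (x : ZMod (2 * k)) : x.val < 2 * k := ZMod.val_lt x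

lemma zval_inj {x y : ZMod (2 * k)} (h : x.val = y.val) : x = y :=
  ZMod.val_injective _ h

lemma zval_sub (x y : ZMod (2 * k)) :
    (x - y).val = if y.val ≤ x.val then x.val - y.val else x.val + 2 * k - y.val := by
  have hx := zval_lt x
  have hy := zval_lt y
  rcases eq_or_ne y 0 with rfl | hy0
  · simp [ZMod.val_zero]
  · have hneg : (-y).val = 2 * k - y.val := by
      rw [ZMod.neg_val]; simp [hy0]
    have hyv : 0 < y.val := by
      rcases Nat.eq_zero_or_pos y.val with h | h
      · exact absurd (zval_inj (by simp [h])) hy0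
      · exact h
    have : (x - y).val = (x.val + (2 * k - y.val)) % (2 * k) := by
      rw [sub_eq_add_neg, ZMod.val_add, hneg]
    rw [this]
    rcases le_or_gt y.val x.val with h | h
    · simp only [h, if_true]
      have h1 : x.val + (2 * k - y.val) = (x.val - y.val) + 2 * k := by omega
      rw [h1, Nat.add_mod_right]
      exact Nat.mod_eq_of_lt (by omega)
    · simp only [not_le.mpr h, if_false]
      rw [Nat.mod_eq_of_lt (by omega)]
      omega

lemma zval_k : ((k : ZMod (2 * k))).val = k := by
  have : (3:ℕ) ≤ k → k < 2 * k := by omega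
  exact ZMod.val_cast_of_lt (by
    have := two_k_pos (k := k)
    omega)

lemma zk_ne_zero (hk : 3 ≤ k) : (k : ZMod (2 * k)) ≠ 0 := by
  intro h
  have := zval_k (k := k)
  rw [h, ZMod.val_zero] at this
  omega

lemma zkk : (k : ZMod (2 * k)) + (k : ZMod (2 * k)) = 0 := by
  rw [← Nat.cast_add, show k + k = 2 * k by ring, ZMod.natCast_self]

lemma z_addk_addk (z : ZMod (2 * k)) : z + k + k = z := by
  rw [add_assoc, zkk, add_zero]

lemma z_addk_ne (hk : 3 ≤ k) (z : ZMod (2 * k)) : z + k ≠ z := by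
  intro h
  apply zk_ne_zero hk
  have := congrArg (fun w => w - z) h
  simpa [add_sub_cancel_left] using this

lemma z_addk_eq_iff (z w : ZMod (2 * k)) : z + k = w ↔ z = w + k := by
  constructor
  · rintro rfl; rw [z_addk_addk]
  · rintro rfl; rw [z_addk_addk]

lemma mem_Cseg {w l : ZMod (2 * k)} (hk : 3 ≤ k) :
    l ∈ Cseg (2 * k) k w ↔ (l - w).val < k := by
  unfold Cseg
  simp only [Finset.mem_image, Finset.mem_range]
  constructor
  · rintro ⟨h, hh, rfl⟩
    have : (w + (h : ZMod (2*k)) - w) = (h : ZMod (2*k)) := by ring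
    rw [this, ZMod.val_cast_of_lt (by omega)]
    exact hh
  · intro h
    refine ⟨(l - w).val, h, ?_⟩
    rw [ZMod.natCast_val, ZMod.cast_id]
    ring

lemma cover_iff {x : Finset (ZMod (2 * k))} (hk : 3 ≤ k) :
    IsCover (2 * k) k x ↔ ∀ w : ZMod (2 * k), ∃ l ∈ x, (l - w).val < k := by
  unfold IsCover
  constructor
  · intro h w
    obtain ⟨l, hl⟩ := h w
    rw [Finset.mem_inter] at hl
    exact ⟨l, hl.1, (mem_Cseg hk).mp hl.2⟩
  · intro h w
    obtain ⟨l, hl, hlv⟩ := h w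
    exact ⟨l, Finset.mem_inter.mpr ⟨hl, (mem_Cseg hk).mpr hlv⟩⟩

end ZModLemmas

end Stmt13Aux

namespace Stmt13Aux

section CoverLemmas

set_option linter.unusedSectionVars false

variable {k : ℕ} [NeZero (2 * k)]

/-- If the step from `x` to `y` is at most `k` and both lie outside the window starting
at `w`, then the value of `y` (relative to `w`) is at least that of `x`; equality forces
`x = y`. -/
lemma noWrap (hk : 3 ≤ k) {x y w : ZMod (2 * k)}
    (hstep : (y - x).val ≤ k) (hx : k ≤ (x - w).val) (hy : k ≤ (y - w).val) :
    (x - w).val ≤ (y - w).val ∧ ((x - w).val = (y - w).val → x = y) := by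
  have hxl := zval_lt (x - w)
  have hyl := zval_lt (y - w)
  have hsub : y - x = (y - w) - (x - w) := by ring
  rw [hsub, zval_sub] at hstep
  constructor
  · by_contra h
    push_neg at h
    rw [if_neg (by omega)] at hstep
    omega
  · intro h
    have : y - w = x - w := zval_inj h.symm
    have := congrArg (fun z => z + w) this
    simpa [sub_add_cancel] using this.symm

lemma cover_pair (hk : 3 ≤ k) (p : ZMod (2 * k)) :
    IsCover (2 * k) k {p, p + (k : ZMod (2 * k))} := by
  rw [cover_iff hk]
  intro w
  rcases lt_or_ge ((p - w).val) k with h | h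
  · exact ⟨p, by simp, h⟩
  · refine ⟨p + k, by simp, ?_⟩
    have : p + (k : ZMod (2*k)) - w = (p - w) + (k : ZMod (2*k)) := by ring
    rw [this, ZMod.val_add, zval_k]
    have h1 := zval_lt (p - w)
    have : ((p - w).val + k) = ((p-w).val - k) + 2 * k := by omega
    rw [this, Nat.add_mod_right, Nat.mod_eq_of_lt (by omega)]
    omega

lemma cover3 (hk : 3 ≤ k) {p u v : ZMod (2 * k)}
    (h1 : (u - p).val ≤ k) (h2 : (v - u).val ≤ k) (h3 : (p - v).val ≤ k)
    (hne : p ≠ u) : IsCover (2 * k) k {p, u, v} := by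
  rw [cover_iff hk]
  intro w
  by_contra hcon
  push_neg at hcon
  have hp := hcon p (by simp)
  have hu := hcon u (by simp)
  have hv := hcon v (by simp)
  obtain ⟨l1, e1⟩ := noWrap hk h1 hp hu
  obtain ⟨l2, e2⟩ := noWrap hk h2 hu hv
  obtain ⟨l3, e3⟩ := noWrap hk h3 hv hp
  exact hne (e1 (by omega))

lemma cover4 (hk : 3 ≤ k) {q0 q1 q2 q3 : ZMod (2 * k)}
    (h1 : (q1 - q0).val ≤ k) (h2 : (q2 - q1).val ≤ k) (h3 : (q3 - q2).val ≤ k)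
    (h4 : (q0 - q3).val ≤ k)
    (hne : ¬(q0 = q1 ∧ q1 = q2 ∧ q2 = q3)) : IsCover (2 * k) k {q0, q1, q2, q3} := by
  rw [cover_iff hk]
  intro w
  by_contra hcon
  push_neg at hcon
  have hp0 := hcon q0 (by simp)
  have hp1 := hcon q1 (by simp)
  have hp2 := hcon q2 (by simp)
  have hp3 := hcon q3 (by simp)
  obtain ⟨l1, e1⟩ := noWrap hk h1 hp0 hp1
  obtain ⟨l2, e2⟩ := noWrap hk h2 hp1 hp2
  obtain ⟨l3, e3⟩ := noWrap hk h3 hp2 hp3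
  obtain ⟨l4, e4⟩ := noWrap hk h4 hp3 hp0
  exact hne ⟨e1 (by omega), e2 (by omega), e3 (by omega)⟩

end CoverLemmas

end Stmt13Aux

namespace Stmt13Aux

section LinAlg

set_option linter.unusedSectionVars false

variable {k : ℕ} [NeZero (2 * k)] {a : ZMod (2 * k) → ℤ} {α : ℤ}

local notation "V" => (ZMod (2 * k) → ℝ)

/-- The set of characteristic vectors of roots. -/
def rootSet (k : ℕ) (a : ZMod (2 * k) → ℤ) (α : ℤ) : Set (ZMod (2 * k) → ℝ) :=
  {v : ZMod (2 * k) → ℝ | ∃ x : Finset (ZMod (2 * k)), IsRoot (2 * k) k a α x ∧ v = charVec (2 * k) x}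

/-- The linear functional given by pointwise dot product with `f`. -/
noncomputable def dotL (f : V) : V →ₗ[ℝ] ℝ where
  toFun v := ∑ i : ZMod (2 * k), f i * v i
  map_add' v w := by
    simp only [Pi.add_apply, mul_add]
    rw [Finset.sum_add_distrib]
  map_smul' c v := by
    simp only [Pi.smul_apply, smul_eq_mul, RingHom.id_apply, Finset.mul_sum]
    congr 1; ext i; ring

lemma dotL_charVec (f : V) (x : Finset (ZMod (2 * k))) :
    dotL f (charVec (2 * k) x) = ∑ i ∈ x, f i := by
  unfold dotL charVec
  simp only [LinearMap.coe_mk, AddHom.coe_mk]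
  rw [← Finset.sum_filter_add_sum_filter_not Finset.univ (· ∈ x)]
  have h2 : ∀ i ∈ Finset.univ.filter (· ∉ x), f i * (if i ∈ x then (1:ℝ) else 0) = 0 := by
    intro i hi
    rw [Finset.mem_filter] at hi
    simp [hi.2]
  rw [Finset.sum_congr rfl h2, Finset.sum_const_zero, add_zero]
  rw [Finset.filter_mem_eq_inter, Finset.univ_inter]
  apply Finset.sum_congr rfl
  intro i hi
  simp [hi]

lemma dotL_single (f : V) (i : ZMod (2 * k)) :
    dotL f (Pi.single i (1:ℝ)) = f i := by
  unfold dotL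
  simp only [LinearMap.coe_mk, AddHom.coe_mk]
  rw [Finset.sum_eq_single i]
  · simp
  · intro b _ hb
    simp [Pi.single_apply, hb]
  · intro h; exact absurd (Finset.mem_univ i) h

lemma finrankV (hk : 3 ≤ k) : Module.finrank ℝ V = 2 * k := by
  rw [Module.finrank_pi ℝ, ZMod.card]

lemma roots_nonempty (hk : 3 ≤ k)
    (hfacet : IsFacet (2 * k) k a α) : ∃ x, IsRoot (2 * k) k a α x := by
  by_contra h
  push_neg at h
  have hS : rootSet k a α = ∅ := by
    ext v
    simp only [rootSet, Set.mem_setOf_eq, Set.mem_empty_iff_false, iff_false]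
    rintro ⟨x, hx, _⟩
    exact h x hx
  have hd : Module.finrank ℝ (affineSpan ℝ (rootSet k a α)).direction = 2 * k - 1 := hfacet.2
  have hbot : (affineSpan ℝ (rootSet k a α)) = ⊥ := by
    rw [hS]; exact AffineSubspace.span_empty _ _ _
  rw [hbot, AffineSubspace.direction_bot, finrank_bot] at hd
  omega

lemma root_card_le_sum (hpos : ∀ i, 1 ≤ a i) {x : Finset (ZMod (2 * k))} :
    (x.card : ℤ) ≤ ∑ i ∈ x, a i := by
  calc (x.card : ℤ) = ∑ _i ∈ x, 1 := by simp
    _ ≤ ∑ i ∈ x, a i := Finset.sum_le_sum (fun i _ => hpos i)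

lemma cover_nonempty (hk : 3 ≤ k) {x : Finset (ZMod (2 * k))} (hc : IsCover (2 * k) k x) :
    x.Nonempty := by
  obtain ⟨l, hl, _⟩ := (cover_iff hk).mp hc 0
  exact ⟨l, hl⟩

lemma alpha_pos (hk : 3 ≤ k) (hpos : ∀ i, 1 ≤ a i)
    (hfacet : IsFacet (2 * k) k a α) : 1 ≤ α := by
  obtain ⟨x, hx⟩ := roots_nonempty hk hfacet
  have h1 := root_card_le_sum (x := x) hpos
  rw [hx.2] at h1
  have h2 : 1 ≤ x.card := (cover_nonempty hk hx.1).card_pos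
  omega

/-- Any affine functional that is constant on the roots is a multiple of `(a, α)`. -/
lemma lemB (hk : 3 ≤ k) (hpos : ∀ i, 1 ≤ a i)
    (hfacet : IsFacet (2 * k) k a α) (c : V) (γ : ℝ)
    (hC : ∀ x : Finset (ZMod (2 * k)), IsRoot (2 * k) k a α x → ∑ i ∈ x, c i = γ) :
    ∃ l : ℝ, (∀ i, c i = l * (a i : ℝ)) ∧ γ = l * (α : ℝ) := by
  classical
  set av : V := fun i => ((a i : ℝ)) with hav
  set φ : V →ₗ[ℝ] ℝ := dotL av with hφ
  set ψ : V →ₗ[ℝ] ℝ := dotL c with hψ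
  obtain ⟨x0, hx0⟩ := roots_nonempty hk hfacet
  -- the direction is contained in both kernels
  have hdirphi : ∀ g : V →ₗ[ℝ] ℝ, (∀ x, IsRoot (2 * k) k a α x → g (charVec (2 * k) x) = g (charVec (2 * k) x0)) →
      (affineSpan ℝ (rootSet k a α)).direction ≤ LinearMap.ker g := by
    intro g hg
    rw [direction_affineSpan]
    rw [vectorSpan_def]
    rw [Submodule.span_le]
    rintro w ⟨v1, hv1, v2, hv2, rfl⟩
    obtain ⟨x1, hx1, rfl⟩ := hv1
    obtain ⟨x2, hx2, rfl⟩ := hv2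
    simp only [SetLike.mem_coe, LinearMap.mem_ker, vsub_eq_sub, map_sub]
    rw [hg x1 hx1, hg x2 hx2, sub_self]
  have haroot : ∀ x, IsRoot (2 * k) k a α x → φ (charVec (2 * k) x) = (α : ℝ) := by
    intro x hx
    rw [hφ, dotL_charVec]
    show (∑ i ∈ x, ((a i : ℝ))) = (α : ℝ)
    exact_mod_cast hx.2
  have hcroot : ∀ x, IsRoot (2 * k) k a α x → ψ (charVec (2 * k) x) = γ := by
    intro x hx
    rw [hψ, dotL_charVec]
    exact hC x hx
  have hDφ : (affineSpan ℝ (rootSet k a α)).direction ≤ LinearMap.ker φ :=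
    hdirphi φ (fun x hx => by rw [haroot x hx, haroot x0 hx0])
  have hDψ : (affineSpan ℝ (rootSet k a α)).direction ≤ LinearMap.ker ψ :=
    hdirphi ψ (fun x hx => by rw [hcroot x hx, hcroot x0 hx0])
  have hφne : φ ≠ 0 := by
    intro h
    have : φ (fun _ => (1:ℝ)) = 0 := by rw [h]; rfl
    rw [hφ] at this
    unfold dotL at this
    simp only [LinearMap.coe_mk, AddHom.coe_mk, mul_one] at this
    have hpos' : (0:ℝ) < ∑ i : ZMod (2 * k), av i := by
      apply Finset.sum_pos
      · intro i _
        have := hpos i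
        rw [hav]
        push_cast
        exact_mod_cast lt_of_lt_of_le zero_lt_one (by exact_mod_cast this)
      · exact ⟨0, Finset.mem_univ 0⟩
    rw [this] at hpos'
    exact lt_irrefl 0 hpos'
  -- kernel of a nonzero functional has rank 2k - 1
  have hkerrank : ∀ g : V →ₗ[ℝ] ℝ, g ≠ 0 → Module.finrank ℝ (LinearMap.ker g) = 2 * k - 1 := by
    intro g hg
    have h1 := LinearMap.finrank_range_add_finrank_ker g
    have hr : Module.finrank ℝ (LinearMap.range g) = 1 := by
      have htop : LinearMap.range g = ⊤ := by
        obtain ⟨w, hw⟩ : ∃ w, g w ≠ 0 := by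
          by_contra hcon
          push_neg at hcon
          exact hg (LinearMap.ext (fun z => by simpa using hcon z))
        rw [Submodule.eq_top_iff']
        intro y
        have : y = (y * (g w)⁻¹) • (g w) := by rw [smul_eq_mul, inv_mul_cancel_right₀ hw]
        rw [this]
        exact Submodule.smul_mem _ _ ⟨w, rfl⟩
      rw [htop, finrank_top, Module.finrank_self]
    rw [hr, finrankV hk] at h1
    omega
  have hDrank : Module.finrank ℝ (affineSpan ℝ (rootSet k a α)).direction = 2 * k - 1 := hfacet.2
  have hDeq : (affineSpan ℝ (rootSet k a α)).direction = LinearMap.ker φ := by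
    apply Submodule.eq_of_le_of_finrank_le hDφ
    rw [hkerrank φ hφne, hDrank]
  rcases eq_or_ne c 0 with rfl | hcne
  · refine ⟨0, by simp, ?_⟩
    have := hC x0 hx0
    simp only [Pi.zero_apply, Finset.sum_const_zero] at this
    rw [← this, zero_mul]
  · have hψne : ψ ≠ 0 := by
      intro h
      apply hcne
      ext i
      have h1 : ψ (Pi.single i 1) = 0 := by rw [h]; rfl
      rw [hψ, dotL_single] at h1
      exact h1
    have hkerψ : LinearMap.ker φ = LinearMap.ker ψ := by
      apply Submodule.eq_of_le_of_finrank_le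
      · rw [← hDeq]; exact hDψ
      · rw [hkerrank φ hφne, hkerrank ψ hψne]
    obtain ⟨z, hz⟩ : ∃ z, φ z ≠ 0 := by
      by_contra h
      push_neg at h
      exact hφne (LinearMap.ext (fun z => by simpa using h z))
    set l : ℝ := ψ z / φ z with hl
    have hψφ : ∀ w, ψ w = l * φ w := by
      intro w
      have hker : w - (φ w / φ z) • z ∈ LinearMap.ker φ := by
        rw [LinearMap.mem_ker, map_sub, map_smul]
        rw [smul_eq_mul, div_mul_cancel₀ _ hz, sub_self]
      rw [hkerψ, LinearMap.mem_ker, map_sub, map_smul] at hker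
      have : ψ w = (φ w / φ z) * ψ z := by
        have := sub_eq_zero.mp hker
        simpa using this
      rw [this, hl]
      field_simp
    refine ⟨l, ?_, ?_⟩
    · intro i
      have h1 : ψ (Pi.single i 1) = l * φ (Pi.single i 1) := hψφ _
      rw [hψ, hφ, dotL_single, dotL_single] at h1
      exact h1
    · have h1 : ψ (charVec (2 * k) x0) = l * φ (charVec (2 * k) x0) := hψφ _
      rw [hcroot x0 hx0, haroot x0 hx0] at h1
      exact h1

end LinAlg

end Stmt13Aux

namespace Stmt13Aux

section Roots

set_option linter.unusedSectionVars false
set_option linter.unusedVariables false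

variable {k : ℕ} [NeZero (2 * k)] {a : ZMod (2 * k) → ℤ} {α : ℤ}

/-- A triple root, with cyclic gaps all in `[1, k-1]`. -/
def TR (k : ℕ) (a : ZMod (2 * k) → ℤ) (α : ℤ) (p u v : ZMod (2 * k)) : Prop :=
  (1 ≤ (u - p).val ∧ (u - p).val ≤ k - 1) ∧
  (1 ≤ (v - u).val ∧ (v - u).val ≤ k - 1) ∧
  (1 ≤ (p - v).val ∧ (p - v).val ≤ k - 1) ∧
  a p + a u + a v = α

lemma zval_neg (hk : 3 ≤ k) {z : ZMod (2 * k)} (hz : z ≠ 0) : (-z).val = 2 * k - z.val := by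
  rw [ZMod.neg_val, if_neg hz]

lemma zval_pos_of_ne (hk : 3 ≤ k) {z w : ZMod (2 * k)} (h : z ≠ w) : 1 ≤ (z - w).val := by
  rcases Nat.eq_zero_or_pos (z - w).val with h0 | h0
  · exfalso
    apply h
    have : z - w = 0 := zval_inj (by simpa using h0)
    have := congrArg (fun t => t + w) this
    simpa [sub_add_cancel] using this
  · exact h0

lemma ne_of_val_pos (hk : 3 ≤ k) {z w : ZMod (2 * k)} (h : 1 ≤ (z - w).val) : z ≠ w := by
  rintro rfl
  simp at h

lemma sum_triple {M : Type*} [AddCommMonoid M] (f : ZMod (2 * k) → M) {p u v : ZMod (2 * k)}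
    (h1 : p ≠ u) (h2 : u ≠ v) (h3 : p ≠ v) :
    ∑ i ∈ ({p, u, v} : Finset (ZMod (2 * k))), f i = f p + f u + f v := by
  rw [Finset.sum_insert (by simp [h1, h3]), Finset.sum_pair h2, ← add_assoc]

lemma eq_add_k_of_val_k (hk : 3 ≤ k) {z w : ZMod (2 * k)} (h : (z - w).val = k) :
    z = w + (k : ZMod (2 * k)) := by
  have : z - w = (k : ZMod (2 * k)) := zval_inj (by rw [h, zval_k])
  have := congrArg (fun t => t + w) this
  simp only [sub_add_cancel] at this
  rw [this]; ring

/-- From any point of a cover one can step forward by at most `k` to another point. -/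
lemma cover_step (hk : 3 ≤ k) {x : Finset (ZMod (2 * k))} (hc : IsCover (2 * k) k x)
    (z : ZMod (2 * k)) : ∃ q ∈ x, 1 ≤ (q - z).val ∧ (q - z).val ≤ k := by
  obtain ⟨l, hl, hlv⟩ := (cover_iff hk).mp hc (z + 1)
  refine ⟨l, hl, ?_⟩
  have h2k : 1 < 2 * k := by omega
  have heq : l - z = (l - (z + 1)) + 1 := by ring
  have hval1 : (1 : ZMod (2 * k)).val = 1 := by
    rw [← Nat.cast_one, ZMod.val_cast_of_lt (by omega)]
  rw [heq, ZMod.val_add, hval1, Nat.mod_eq_of_lt (by omega)]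
  omega

/-- Greedy extraction of a pair or triple subcover. -/
lemma greedy (hk : 3 ≤ k) {x : Finset (ZMod (2 * k))} (hc : IsCover (2 * k) k x) :
    (∃ p, p ∈ x ∧ p + (k : ZMod (2 * k)) ∈ x) ∨
    (∃ p u v, p ∈ x ∧ u ∈ x ∧ v ∈ x ∧
      (1 ≤ (u - p).val ∧ (u - p).val ≤ k) ∧
      (1 ≤ (v - u).val ∧ (v - u).val ≤ k) ∧
      (1 ≤ (p - v).val ∧ (p - v).val ≤ k)) := by
  classical
  obtain ⟨p, hp⟩ := cover_nonempty hk hc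
  set Q := x.filter (fun q => 1 ≤ (q - p).val ∧ (q - p).val ≤ k) with hQ
  have hQne : Q.Nonempty := by
    obtain ⟨q, hq, hq1, hq2⟩ := cover_step hk hc p
    exact ⟨q, Finset.mem_filter.mpr ⟨hq, hq1, hq2⟩⟩
  obtain ⟨q, hqQ, hqmax⟩ := Finset.exists_max_image Q (fun q => (q - p).val) hQne
  rw [hQ, Finset.mem_filter] at hqQ
  obtain ⟨hqx, hq1, hq2⟩ := hqQ
  obtain ⟨r, hrx, hr1, hr2⟩ := cover_step hk hc q
  rcases eq_or_ne r p with hrp | hrp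
  · -- pair case : val (q-p) = k
    left
    rw [hrp] at hr1 hr2
    have hqp : q ≠ p := ne_of_val_pos hk hq1
    have hpq : (p - q).val = 2 * k - (q - p).val := by
      have heq : p - q = -(q - p) := by ring
      rw [heq, zval_neg hk (sub_ne_zero.mpr hqp)]
    have hvk : (q - p).val = k := by omega
    refine ⟨p, hp, ?_⟩
    have := eq_add_k_of_val_k hk hvk
    rw [← this]; exact hqx
  · -- triple case
    right
    refine ⟨p, q, r, hp, hqx, hrx, ⟨hq1, hq2⟩, ⟨hr1, hr2⟩, ?_⟩
    have hpr1 : 1 ≤ (p - r).val := zval_pos_of_ne hk (Ne.symm hrp)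
    refine ⟨hpr1, ?_⟩
    by_contra hcon
    push_neg at hcon
    -- then (r - p).val ∈ [1, k-1], so r ∈ Q
    have hprlt := zval_lt (p - r)
    have hrpv : (r - p).val = 2 * k - (p - r).val := by
      have heq : r - p = -(p - r) := by ring
      rw [heq, zval_neg hk (sub_ne_zero.mpr (Ne.symm hrp))]
    have hrQ : r ∈ Q := by
      rw [hQ, Finset.mem_filter]
      exact ⟨hrx, by omega, by omega⟩
    have hle := hqmax r hrQ
    -- compute (r - q).val
    have hsub : r - q = (r - p) - (q - p) := by ring
    rw [hsub, zval_sub] at hr1 hr2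
    rcases eq_or_ne ((r - p).val) ((q - p).val) with he | hne
    · have : r - p = q - p := zval_inj he
      have : r = q := by
        have := congrArg (fun t => t + p) this
        simpa [sub_add_cancel] using this
      rw [if_pos (le_of_eq he.symm)] at hr1
      omega
    · have hlt : (r - p).val < (q - p).val := lt_of_le_of_ne hle hne
      rw [if_neg (by omega)] at hr2
      omega

/-- Every root is an antipodal pair or a triple with gaps in `[1, k-1]`. -/
lemma classify (hk : 3 ≤ k) (hval : IsValid (2 * k) k a α) (hpos : ∀ i, 1 ≤ a i)
    {x : Finset (ZMod (2 * k))} (hroot : IsRoot (2 * k) k a α x) :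
    (∃ p, x = {p, p + (k : ZMod (2 * k))}) ∨
    (∃ p u v, x = {p, u, v} ∧ TR k a α p u v) := by
  classical
  have hx_eq_of_subset : ∀ s : Finset (ZMod (2 * k)), s ⊆ x → α ≤ ∑ i ∈ s, a i → x = s := by
    intro s hs hαs
    by_contra hne
    have hss : s ⊂ x := Finset.ssubset_iff_subset_ne.mpr ⟨hs, fun h => hne h.symm⟩
    obtain ⟨e, hex, hes⟩ := Finset.exists_of_ssubset hss
    have hlt : ∑ i ∈ s, a i < ∑ i ∈ x, a i :=
      Finset.sum_lt_sum_of_subset hs hex hes (by have := hpos e; omega)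
        (fun j _ _ => le_trans (by omega) (hpos j))
    rw [hroot.2] at hlt
    omega
  rcases greedy hk hroot.1 with ⟨p, hp, hpk⟩ | ⟨p, u, v, hp, hu, hv, hg1, hg2, hg3⟩
  · left
    refine ⟨p, ?_⟩
    have hsub : ({p, p + (k : ZMod (2 * k))} : Finset (ZMod (2 * k))) ⊆ x := by
      intro i hi
      rcases Finset.mem_insert.mp hi with rfl | hi
      · exact hp
      · rw [Finset.mem_singleton] at hi; rw [hi]; exact hpk
    have hne : p ≠ p + (k : ZMod (2 * k)) := (z_addk_ne hk p).symm
    have hvalid := hval _ (cover_pair hk p)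
    rw [Finset.sum_pair hne] at hvalid
    exact hx_eq_of_subset _ hsub (by rw [Finset.sum_pair hne]; exact hvalid)
  · right
    have hpu : p ≠ u := ne_of_val_pos hk hg1.1 |>.symm
    have huv : u ≠ v := ne_of_val_pos hk hg2.1 |>.symm
    have hvp : p ≠ v := ne_of_val_pos hk hg3.1
    have hsub : ({p, u, v} : Finset (ZMod (2 * k))) ⊆ x := by
      intro i hi
      rcases Finset.mem_insert.mp hi with rfl | hi
      · exact hp
      rcases Finset.mem_insert.mp hi with rfl | hi
      · exact hu
      rw [Finset.mem_singleton] at hi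
      rw [hi]; exact hv
    have hvalid := hval _ (cover3 hk hg1.2 hg2.2 hg3.2 hpu)
    rw [sum_triple a hpu huv hvp] at hvalid
    have hxeq : x = {p, u, v} :=
      hx_eq_of_subset _ hsub (by rw [sum_triple a hpu huv hvp]; exact hvalid)
    have hsum : a p + a u + a v = α := by
      rw [← sum_triple a hpu huv hvp, ← hxeq]
      exact hroot.2
    refine ⟨p, u, v, hxeq, ?_⟩
    -- exclude gaps equal to k
    have hpair_excl : ∀ w z : ZMod (2 * k), w ∈ x → z ∈ x → z = w + (k : ZMod (2 * k)) →
        (∃ e, e ∈ x ∧ e ≠ w ∧ e ≠ z) → False := by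
      rintro w z hwx hzx rfl ⟨e, hex, hew, hez⟩
      have hvalid2 := hval _ (cover_pair hk w)
      rw [Finset.sum_pair (z_addk_ne hk w).symm] at hvalid2
      have hsubp : ({w, w + (k : ZMod (2 * k))} : Finset (ZMod (2 * k))) ⊆ x := by
        intro i hi
        rcases Finset.mem_insert.mp hi with rfl | hi
        · exact hwx
        · rw [Finset.mem_singleton] at hi; rw [hi]; exact hzx
      have hlt : ∑ i ∈ ({w, w + (k : ZMod (2 * k))} : Finset (ZMod (2 * k))), a i < ∑ i ∈ x, a i :=
        Finset.sum_lt_sum_of_subset hsubp hex (by simp [hew, hez]) (by have := hpos e; omega)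
          (fun j _ _ => le_trans (by omega) (hpos j))
      rw [hroot.2, Finset.sum_pair (z_addk_ne hk w).symm] at hlt
      omega
    have h1k : (u - p).val ≠ k := by
      intro h
      exact hpair_excl p u hp hu (eq_add_k_of_val_k hk h) ⟨v, hv, (Ne.symm hvp), (Ne.symm huv)⟩
    have h2k : (v - u).val ≠ k := by
      intro h
      exact hpair_excl u v hu hv (eq_add_k_of_val_k hk h) ⟨p, hp, hpu, hvp⟩
    have h3k : (p - v).val ≠ k := by
      intro h
      exact hpair_excl v p hv hp (eq_add_k_of_val_k hk h) ⟨u, hu, huv, hpu.symm⟩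
    exact ⟨⟨hg1.1, by omega⟩, ⟨hg2.1, by omega⟩, ⟨hg3.1, by omega⟩, hsum⟩

/-- Rotating a triple root. -/
lemma tr_rot {p u v : ZMod (2 * k)} (h : TR k a α p u v) : TR k a α u v p := by
  obtain ⟨h1, h2, h3, h4⟩ := h
  exact ⟨h2, h3, h1, by linarith⟩

/-- Basic positions of a triple root. -/
lemma tr_vals (hk : 3 ≤ k) {p u v : ZMod (2 * k)} (h : TR k a α p u v) :
    (v - p).val = (u - p).val + (v - u).val ∧
    k + 1 ≤ (v - p).val ∧ (v - p).val ≤ 2 * k - 1 := by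
  obtain ⟨⟨hA1, hA2⟩, ⟨hB1, hB2⟩, ⟨hC1, hC2⟩, _⟩ := h
  have hCne : p - v ≠ 0 := by
    intro h0
    have := congrArg ZMod.val h0
    rw [ZMod.val_zero] at this
    omega
  have hvp : (v - p).val = 2 * k - (p - v).val := by
    have heq : v - p = -(p - v) := by ring
    rw [heq, zval_neg hk hCne]
  have hAB : ((u - p) + (v - u)).val = (u - p).val + (v - u).val := by
    rw [ZMod.val_add, Nat.mod_eq_of_lt (by omega)]
  have heq2 : (u - p) + (v - u) = v - p := by ring
  rw [heq2] at hAB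
  constructor
  · exact hAB
  constructor
  · omega
  · omega

end Roots

end Stmt13Aux

namespace Stmt13Aux

section Main1

set_option linter.unusedSectionVars false
set_option linter.unusedVariables false

variable {k : ℕ} [NeZero (2 * k)] {a : ZMod (2 * k) → ℤ} {α : ℤ}

lemma v_pair (hk : 3 ≤ k) (hval : IsValid (2 * k) k a α) (p : ZMod (2 * k)) :
    α ≤ a p + a (p + (k : ZMod (2 * k))) := by
  have h := hval _ (cover_pair hk p)
  rwa [Finset.sum_pair (z_addk_ne hk p).symm] at h

lemma exists_root_mem (hk : 3 ≤ k) (hpos : ∀ i, 1 ≤ a i)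
    (hfacet : IsFacet (2 * k) k a α) (p : ZMod (2 * k)) :
    ∃ x, IsRoot (2 * k) k a α x ∧ p ∈ x := by
  classical
  by_contra h
  push_neg at h
  obtain ⟨l, hl1, hl2⟩ := lemB hk hpos hfacet (fun i => if i = p then 1 else 0) 0
    (by
      intro x hx
      rw [Finset.sum_ite_eq' x p (fun _ => (1:ℝ))]
      rw [if_neg (h x hx)])
  have hα : (1:ℤ) ≤ α := alpha_pos hk hpos hfacet
  have hl0 : l = 0 := by
    rcases mul_eq_zero.mp hl2.symm with h0 | h0
    · exact h0
    · exfalso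
      have : (α : ℝ) ≠ 0 := by
        exact_mod_cast (by omega : α ≠ 0)
      exact this h0
  have := hl1 p
  rw [if_pos rfl, hl0, zero_mul] at this
  exact one_ne_zero this

lemma sum_insert_le' (hpos : ∀ i, 1 ≤ a i) (q : ZMod (2 * k)) (s : Finset (ZMod (2 * k))) :
    ∑ i ∈ insert q s, a i ≤ a q + ∑ i ∈ s, a i := by
  classical
  by_cases h : q ∈ s
  · rw [Finset.insert_eq_self.mpr h]
    have := hpos q; omega
  · rw [Finset.sum_insert h]

lemma sum3_le (hpos : ∀ i, 1 ≤ a i) (q0 q1 q2 : ZMod (2 * k)) :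
    ∑ i ∈ ({q0, q1, q2} : Finset (ZMod (2 * k))), a i ≤ a q0 + a q1 + a q2 := by
  have h1 := sum_insert_le' hpos q0 {q1, q2}
  have h2 := sum_insert_le' hpos q1 {q2}
  rw [Finset.sum_singleton] at h2
  calc ∑ i ∈ ({q0, q1, q2} : Finset (ZMod (2 * k))), a i
      ≤ a q0 + ∑ i ∈ ({q1, q2} : Finset (ZMod (2 * k))), a i := h1
    _ ≤ a q0 + (a q1 + a q2) := by omega
    _ = a q0 + a q1 + a q2 := by ring

lemma sum4_le (hpos : ∀ i, 1 ≤ a i) (q0 q1 q2 q3 : ZMod (2 * k)) :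
    ∑ i ∈ ({q0, q1, q2, q3} : Finset (ZMod (2 * k))), a i ≤ a q0 + a q1 + a q2 + a q3 := by
  have h1 := sum_insert_le' hpos q0 {q1, q2, q3}
  have h2 := sum3_le hpos q1 q2 q3
  calc ∑ i ∈ ({q0, q1, q2, q3} : Finset (ZMod (2 * k))), a i
      ≤ a q0 + ∑ i ∈ ({q1, q2, q3} : Finset (ZMod (2 * k))), a i := h1
    _ ≤ a q0 + (a q1 + a q2 + a q3) := by omega
    _ = a q0 + a q1 + a q2 + a q3 := by ring

set_option maxHeartbeats 1000000 in
/-- The central contradiction: there are no triple roots based at both `p` and `p + k`. -/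
lemma fourCover (hk : 3 ≤ k) (hval : IsValid (2 * k) k a α) (hpos : ∀ i, 1 ≤ a i)
    {p u v u' v' : ZMod (2 * k)}
    (ht : TR k a α p u v) (ht' : TR k a α (p + (k : ZMod (2 * k))) u' v') : False := by
  classical
  obtain ⟨⟨hA11, hA12⟩, ⟨hB11, hB12⟩, ⟨hC11, hC12⟩, hsum1⟩ := ht
  obtain ⟨⟨hA21, hA22⟩, ⟨hB21, hB22⟩, ⟨hC21, hC22⟩, hsum2⟩ := ht'
  obtain ⟨hE1eq, hE11, hE12⟩ := tr_vals hk ⟨⟨hA11, hA12⟩, ⟨hB11, hB12⟩, ⟨hC11, hC12⟩, hsum1⟩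
  obtain ⟨hE2eq, hE21, hE22⟩ := tr_vals hk ⟨⟨hA21, hA22⟩, ⟨hB21, hB22⟩, ⟨hC21, hC22⟩, hsum2⟩
  -- relative positions w.r.t. p
  set A1 := (u - p).val with hA1
  set E1 := (v - p).val with hE1
  set A2 := (u' - (p + (k : ZMod (2 * k)))).val with hA2
  set E2 := (v' - (p + (k : ZMod (2 * k)))).val with hE2
  have hζu' : (u' - p).val = k + A2 := by
    have heq : u' - p = (u' - (p + (k : ZMod (2 * k)))) + (k : ZMod (2 * k)) := by ring
    rw [heq, ZMod.val_add, zval_k, ← hA2, Nat.mod_eq_of_lt (by omega)]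
    omega
  have hζv' : (v' - p).val = E2 - k := by
    have heq : v' - p = (v' - (p + (k : ZMod (2 * k)))) + (k : ZMod (2 * k)) := by ring
    rw [heq, ZMod.val_add, zval_k, ← hE2]
    have h1 : E2 + k = (E2 - k) + 2 * k := by omega
    rw [h1, Nat.add_mod_right, Nat.mod_eq_of_lt (by omega)]
  -- gap computations relative to p
  have hgapb : ∀ y z : ZMod (2 * k), (y - p).val ≤ (z - p).val →
      (z - p).val ≤ (y - p).val + k → (z - y).val ≤ k := by
    intro y z h1 h2
    have heq : z - y = (z - p) - (y - p) := by ring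
    rw [heq, zval_sub, if_pos h1]
    omega
  have hgapw : ∀ y z : ZMod (2 * k), (z - p).val < (y - p).val →
      (z - p).val + 2 * k ≤ (y - p).val + k → (z - y).val ≤ k := by
    intro y z h1 h2
    have heq : z - y = (z - p) - (y - p) := by ring
    rw [heq, zval_sub, if_neg (by omega)]
    omega
  have hne_of_ζ : ∀ y z : ZMod (2 * k), (y - p).val ≠ (z - p).val → y ≠ z := by
    intro y z h hyz
    exact h (by rw [hyz])
  -- distinctness facts
  have huv : u ≠ v := hne_of_ζ u v (by omega)
  have huu' : u ≠ u' := hne_of_ζ u u' (by rw [hζu']; omega)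
  have hvv' : v ≠ v' := hne_of_ζ v v' (by rw [hζv']; omega)
  have hu'v' : u' ≠ v' := hne_of_ζ u' v' (by rw [hζu', hζv']; omega)
  -- the four-point set is a cover
  have hcov : IsCover (2 * k) k ({u, v, u', v'} : Finset (ZMod (2 * k))) := by
    rcases le_or_gt A1 (E2 - k) with hc1 | hc1 <;> rcases le_or_gt E1 (k + A2) with hc2 | hc2
    · -- order u, v', v, u'
      have h := cover4 hk (q0 := u) (q1 := v') (q2 := v) (q3 := u')
        (hgapb u v' (by rw [hζv']; omega) (by rw [hζv']; omega))
        (hgapb v' v (by rw [hζv']; omega) (by rw [hζv']; omega))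
        (hgapb v u' (by rw [hζu']; omega) (by rw [hζu']; omega))
        (hgapw u' u (by rw [hζu']; omega) (by rw [hζu']; omega))
        (by rintro ⟨e1, e2, -⟩; exact huv (e1.trans e2))
      rwa [show ({u, v', v, u'} : Finset (ZMod (2 * k))) = {u, v, u', v'} by
        ext i; simp only [Finset.mem_insert, Finset.mem_singleton]; tauto] at h
    · -- order u, v', u', v
      have h := cover4 hk (q0 := u) (q1 := v') (q2 := u') (q3 := v)
        (hgapb u v' (by rw [hζv']; omega) (by rw [hζv']; omega))
        (hgapb v' u' (by rw [hζv', hζu']; omega) (by rw [hζv', hζu']; omega))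
        (hgapb u' v (by rw [hζu']; omega) (by rw [hζu']; omega))
        (hgapw v u (by omega) (by omega))
        (by rintro ⟨e1, e2, e3⟩; exact huv (e1.trans (e2.trans e3)))
      rwa [show ({u, v', u', v} : Finset (ZMod (2 * k))) = {u, v, u', v'} by
        ext i; simp only [Finset.mem_insert, Finset.mem_singleton]; tauto] at h
    · -- order v', u, v, u'
      have h := cover4 hk (q0 := v') (q1 := u) (q2 := v) (q3 := u')
        (hgapb v' u (by rw [hζv']; omega) (by rw [hζv']; omega))
        (hgapb u v (by omega) (by omega))
        (hgapb v u' (by rw [hζu']; omega) (by rw [hζu']; omega))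
        (hgapw u' v' (by rw [hζu', hζv']; omega) (by rw [hζu', hζv']; omega))
        (by rintro ⟨-, e2, -⟩; exact huv e2)
      rwa [show ({v', u, v, u'} : Finset (ZMod (2 * k))) = {u, v, u', v'} by
        ext i; simp only [Finset.mem_insert, Finset.mem_singleton]; tauto] at h
    · -- order v', u, u', v
      have h := cover4 hk (q0 := v') (q1 := u) (q2 := u') (q3 := v)
        (hgapb v' u (by rw [hζv']; omega) (by rw [hζv']; omega))
        (hgapb u u' (by rw [hζu']; omega) (by rw [hζu']; omega))
        (hgapb u' v (by rw [hζu']; omega) (by rw [hζu']; omega))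
        (hgapw v v' (by rw [hζv']; omega) (by rw [hζv']; omega))
        (by rintro ⟨-, e2, e3⟩; exact huv (e2.trans e3))
      rwa [show ({v', u, u', v} : Finset (ZMod (2 * k))) = {u, v, u', v'} by
        ext i; simp only [Finset.mem_insert, Finset.mem_singleton]; tauto] at h
  -- validity and counting
  have hval4 := hval _ hcov
  have hS4 : a u + a v + a u' + a v' = 2 * α - (a p + a (p + (k : ZMod (2 * k)))) := by omega
  have hsp := v_pair hk hval p
  have hle := sum4_le hpos u v u' v'
  have hsum_eq : ∑ i ∈ ({u, v, u', v'} : Finset (ZMod (2 * k))), a i = α := by omega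
  have hspeq : a p + a (p + (k : ZMod (2 * k))) = α := by omega
  -- coincidences lead to strict violation of validity
  rcases eq_or_ne u v' with he | huv'
  · have hset : ({u, v, u', v'} : Finset (ZMod (2 * k))) = {u, v, u'} := by
      ext i; simp only [Finset.mem_insert, Finset.mem_singleton]
      constructor
      · rintro (h | h | h | h) <;> try tauto
        exact Or.inl (h.trans he.symm)
      · tauto
    rw [hset] at hsum_eq
    have := sum3_le hpos u v u'
    have := hpos v'
    omega
  rcases eq_or_ne v u' with he | hvu'
  · have hset : ({u, v, u', v'} : Finset (ZMod (2 * k))) = {u, v, v'} := by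
      ext i; simp only [Finset.mem_insert, Finset.mem_singleton]
      constructor
      · rintro (h | h | h | h) <;> try tauto
        exact Or.inr (Or.inl (h.trans he.symm))
      · tauto
    rw [hset] at hsum_eq
    have := sum3_le hpos u v v'
    have := hpos u'
    omega
  -- all four distinct: the set is a root of cardinality 4, contradicting classification
  have hcard : ({u, v, u', v'} : Finset (ZMod (2 * k))).card = 4 := by
    rw [Finset.card_insert_of_notMem (by simp [huv, huu', huv']),
        Finset.card_insert_of_notMem (by simp [hvu', hvv']),
        Finset.card_insert_of_notMem (by simp [hu'v']),
        Finset.card_singleton]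
  have hroot4 : IsRoot (2 * k) k a α ({u, v, u', v'} : Finset (ZMod (2 * k))) := ⟨hcov, hsum_eq⟩
  rcases classify hk hval hpos hroot4 with ⟨p0, hp0⟩ | ⟨p0, u0, v0, hp0, _⟩
  · have : ({u, v, u', v'} : Finset (ZMod (2 * k))).card ≤ 2 := by
      rw [hp0]
      exact le_trans (Finset.card_insert_le _ _) (by simp)
    omega
  · have : ({u, v, u', v'} : Finset (ZMod (2 * k))).card ≤ 3 := by
      rw [hp0]
      exact le_trans (Finset.card_insert_le _ _)
        (by
          have := Finset.card_insert_le u0 ({v0} : Finset (ZMod (2 * k)))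
          simp only [Finset.card_singleton] at this ⊢
          omega)
    omega

end Main1

end Stmt13Aux

namespace Stmt13Aux

section Main2

set_option linter.unusedSectionVars false
set_option linter.unusedVariables false

variable {k : ℕ} [NeZero (2 * k)] {a : ZMod (2 * k) → ℤ} {α : ℤ}

/-- `i` belongs to some triple root. -/
def inN (k : ℕ) (a : ZMod (2 * k) → ℤ) (α : ℤ) (i : ZMod (2 * k)) : Prop :=
  ∃ p u v, TR k a α p u v ∧ (i = p ∨ i = u ∨ i = v)

lemma inN_base {i : ZMod (2 * k)} (h : inN k a α i) : ∃ y z, TR k a α i y z := by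
  obtain ⟨p, u, v, ht, hmem⟩ := h
  rcases hmem with rfl | rfl | rfl
  · exact ⟨u, v, ht⟩
  · exact ⟨v, p, tr_rot ht⟩
  · exact ⟨p, u, tr_rot (tr_rot ht)⟩

lemma not_inN_both (hk : 3 ≤ k) (hval : IsValid (2 * k) k a α) (hpos : ∀ i, 1 ≤ a i)
    {i : ZMod (2 * k)} (h1 : inN k a α i) (h2 : inN k a α (i + (k : ZMod (2 * k)))) : False := by
  obtain ⟨y, z, ht⟩ := inN_base h1
  obtain ⟨y', z', ht'⟩ := inN_base h2
  exact fourCover hk hval hpos ht ht'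

lemma kernelZero (hk : 3 ≤ k) (hpos : ∀ i, 1 ≤ a i) (hfacet : IsFacet (2 * k) k a α)
    (c : ZMod (2 * k) → ℝ)
    (hC : ∀ x : Finset (ZMod (2 * k)), IsRoot (2 * k) k a α x → ∑ i ∈ x, c i = 0) :
    ∀ i, c i = 0 := by
  obtain ⟨l, hl1, hl2⟩ := lemB hk hpos hfacet c 0 hC
  have hα : (1:ℤ) ≤ α := alpha_pos hk hpos hfacet
  have hl0 : l = 0 := by
    rcases mul_eq_zero.mp hl2.symm with h0 | h0
    · exact h0
    · exact absurd h0 (by exact_mod_cast (by omega : α ≠ 0))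
  intro i
  rw [hl1 i, hl0, zero_mul]

lemma pair_root_sum (hk : 3 ≤ k) {q : ZMod (2 * k)}
    (hroot : IsRoot (2 * k) k a α ({q, q + (k : ZMod (2 * k))} : Finset (ZMod (2 * k)))) :
    a q + a (q + (k : ZMod (2 * k))) = α := by
  have := hroot.2
  rwa [Finset.sum_pair (z_addk_ne hk q).symm] at this

lemma pair_root_sum_mem (hk : 3 ≤ k) {q p : ZMod (2 * k)}
    (hroot : IsRoot (2 * k) k a α ({q, q + (k : ZMod (2 * k))} : Finset (ZMod (2 * k))))
    (hmem : p ∈ ({q, q + (k : ZMod (2 * k))} : Finset (ZMod (2 * k)))) :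
    a p + a (p + (k : ZMod (2 * k))) = α := by
  have hq := pair_root_sum hk hroot
  rcases Finset.mem_insert.mp hmem with rfl | hmem
  · exact hq
  · rw [Finset.mem_singleton] at hmem
    subst hmem
    rw [z_addk_addk]
    omega

/-- All antipodal pairs are roots. -/
lemma pairs_root (hk : 3 ≤ k) (hval : IsValid (2 * k) k a α) (hpos : ∀ i, 1 ≤ a i)
    (hfacet : IsFacet (2 * k) k a α) (p : ZMod (2 * k)) :
    a p + a (p + (k : ZMod (2 * k))) = α := by
  by_contra hne
  obtain ⟨x, hx, hpx⟩ := exists_root_mem hk hpos hfacet p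
  have htp : ∃ y z, TR k a α p y z := by
    rcases classify hk hval hpos hx with ⟨q, rfl⟩ | ⟨p0, u0, v0, rfl, htr⟩
    · exact absurd (pair_root_sum_mem hk hx hpx) hne
    · exact inN_base ⟨p0, u0, v0, htr, by simpa using hpx⟩
  obtain ⟨x', hx', hpx'⟩ := exists_root_mem hk hpos hfacet (p + (k : ZMod (2 * k)))
  have htp' : ∃ y z, TR k a α (p + (k : ZMod (2 * k))) y z := by
    rcases classify hk hval hpos hx' with ⟨q, rfl⟩ | ⟨p0, u0, v0, rfl, htr⟩
    · exfalso
      have h1 := pair_root_sum_mem hk hx' hpx'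
      rw [z_addk_addk] at h1
      exact hne (by omega)
    · exact inN_base ⟨p0, u0, v0, htr, by simpa using hpx'⟩
  obtain ⟨y, z, ht⟩ := htp
  obtain ⟨y', z', ht'⟩ := htp'
  exact fourCover hk hval hpos ht ht'

lemma addk_iff {z w : ZMod (2 * k)} : z = w + (k : ZMod (2 * k)) ↔ z + (k : ZMod (2 * k)) = w := by
  constructor
  · rintro rfl; rw [z_addk_addk]
  · rintro rfl; rw [z_addk_addk]

/-- Every antipodal pair of positions meets some triple root. -/
lemma inN_or (hk : 3 ≤ k) (hval : IsValid (2 * k) k a α) (hpos : ∀ i, 1 ≤ a i)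
    (hfacet : IsFacet (2 * k) k a α) (i : ZMod (2 * k)) :
    inN k a α i ∨ inN k a α (i + (k : ZMod (2 * k))) := by
  classical
  by_contra h
  push_neg at h
  obtain ⟨h1, h2⟩ := h
  have hker := kernelZero hk hpos hfacet
    (fun j => (if j = i then (1:ℝ) else 0) - (if j = i + (k : ZMod (2 * k)) then 1 else 0))
    (by
      intro x hx
      rw [Finset.sum_sub_distrib, Finset.sum_ite_eq' x i (fun _ => (1:ℝ)),
        Finset.sum_ite_eq' x (i + (k : ZMod (2 * k))) (fun _ => (1:ℝ))]
      rcases classify hk hval hpos hx with ⟨q, rfl⟩ | ⟨p0, u0, v0, rfl, htr⟩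
      · -- pair root : i ∈ x ↔ i + k ∈ x
        have hiff : (i ∈ ({q, q + (k : ZMod (2 * k))} : Finset (ZMod (2 * k)))) ↔
            (i + (k : ZMod (2 * k)) ∈ ({q, q + (k : ZMod (2 * k))} : Finset (ZMod (2 * k)))) := by
          simp only [Finset.mem_insert, Finset.mem_singleton]
          constructor
          · rintro (rfl | h)
            · right; rfl
            · left; exact addk_iff.mp h
          · rintro (h | h)
            · right; exact addk_iff.mpr h
            · left
              have := addk_iff.mp h.symm
              rw [← this, z_addk_addk]
        by_cases hmem : i ∈ ({q, q + (k : ZMod (2 * k))} : Finset (ZMod (2 * k)))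
        · rw [if_pos hmem, if_pos (hiff.mp hmem), sub_self]
        · rw [if_neg hmem, if_neg (fun hc => hmem (hiff.mpr hc)), sub_self]
      · -- triple root : neither i nor i + k belongs
        have hni : i ∉ ({p0, u0, v0} : Finset (ZMod (2 * k))) := by
          intro hc
          exact h1 ⟨p0, u0, v0, htr, by simpa using hc⟩
        have hni' : i + (k : ZMod (2 * k)) ∉ ({p0, u0, v0} : Finset (ZMod (2 * k))) := by
          intro hc
          exact h2 ⟨p0, u0, v0, htr, by simpa using hc⟩
        rw [if_neg hni, if_neg hni', sub_self])
  have hfin := hker i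
  simp only at hfin
  have hne' : i ≠ i + (k : ZMod (2 * k)) := fun hc => z_addk_ne hk i hc.symm
  rw [if_neg hne'] at hfin
  norm_num at hfin

/-- There exists a triple root. -/
lemma exists_TR (hk : 3 ≤ k) (hval : IsValid (2 * k) k a α) (hpos : ∀ i, 1 ≤ a i)
    (hfacet : IsFacet (2 * k) k a α) : ∃ p u v, TR k a α p u v := by
  classical
  by_contra h
  push_neg at h
  set T : Finset (ZMod (2 * k) → ℝ) := (Finset.range k).image
    (fun j : ℕ => charVec (2 * k) {(j : ZMod (2 * k)), (j : ZMod (2 * k)) + (k : ZMod (2 * k))})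
    with hT
  have hsub : rootSet k a α ⊆ ↑(Submodule.span ℝ (T : Set (ZMod (2 * k) → ℝ))) := by
    rintro w ⟨x, hx, rfl⟩
    rcases classify hk hval hpos hx with ⟨q, rfl⟩ | ⟨p0, u0, v0, _, htr⟩
    · apply Submodule.subset_span
      rw [hT]
      simp only [Finset.coe_image, Set.mem_image, Finset.mem_coe, Finset.mem_range]
      rcases lt_or_ge q.val k with hq | hq
      · refine ⟨q.val, hq, ?_⟩
        congr 1
        rw [ZMod.natCast_rightInverse q]
      · refine ⟨q.val - k, by have := zval_lt q; omega, ?_⟩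
        have hcast : ((q.val - k : ℕ) : ZMod (2 * k)) = q + (k : ZMod (2 * k)) := by
          apply zval_inj
          rw [ZMod.val_cast_of_lt (by have := zval_lt q; omega)]
          rw [ZMod.val_add, zval_k]
          have h1 : q.val + k = (q.val - k) + 2 * k := by have := zval_lt q; omega
          rw [h1, Nat.add_mod_right, Nat.mod_eq_of_lt (by have := zval_lt q; omega)]
        rw [hcast]
        congr 1
        rw [Finset.pair_comm]
        congr 1
        rw [z_addk_addk]
    · exact absurd htr (h p0 u0 v0)
  have hd : Module.finrank ℝ (affineSpan ℝ (rootSet k a α)).direction = 2 * k - 1 := hfacet.2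
  have hle : (affineSpan ℝ (rootSet k a α)).direction ≤ Submodule.span ℝ (T : Set (ZMod (2 * k) → ℝ)) := by
    rw [direction_affineSpan, vectorSpan_def, Submodule.span_le]
    rintro w ⟨v1, hv1, v2, hv2, rfl⟩
    exact Submodule.sub_mem _ (hsub hv1) (hsub hv2)
  have hrank := Submodule.finrank_mono hle
  rw [hd] at hrank
  have hrank2 : Module.finrank ℝ (Submodule.span ℝ (T : Set (ZMod (2 * k) → ℝ))) ≤ T.card :=
    finrank_span_finset_le_card T
  have hcardT : T.card ≤ k := le_trans (Finset.card_image_le) (by simp)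
  omega

end Main2

end Stmt13Aux

namespace Stmt13Aux

section Main3

set_option linter.unusedSectionVars false
set_option linter.unusedVariables false

variable {k : ℕ} [NeZero (2 * k)] {a : ZMod (2 * k) → ℤ} {α : ℤ}

lemma tr_distinct (hk : 3 ≤ k) {p u v : ZMod (2 * k)} (ht : TR k a α p u v) :
    p ≠ u ∧ u ≠ v ∧ p ≠ v :=
  ⟨(ne_of_val_pos hk ht.1.1).symm, (ne_of_val_pos hk ht.2.1.1).symm,
    ne_of_val_pos hk ht.2.2.1.1⟩

lemma tr_cover (hk : 3 ≤ k) {p u v : ZMod (2 * k)} (ht : TR k a α p u v) :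
    IsCover (2 * k) k ({p, u, v} : Finset (ZMod (2 * k))) := by
  have h12 := ht.1.2
  have h22 := ht.2.1.2
  have h32 := ht.2.2.1.2
  exact cover3 hk (by omega) (by omega) (by omega) (tr_distinct hk ht).1

/-- All coefficients on triple-root positions equal `α / 3`. -/
lemma inN_val (hk : 3 ≤ k) (hval : IsValid (2 * k) k a α) (hpos : ∀ i, 1 ≤ a i)
    (hfacet : IsFacet (2 * k) k a α) :
    ∀ i, inN k a α i → 3 * (a i : ℝ) = (α : ℝ) := by
  classical
  set c : ZMod (2 * k) → ℝ := fun i =>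
    if inN k a α i then (a i : ℝ) - (α : ℝ)/3 else (a i : ℝ) - 2*(α : ℝ)/3 with hc
  have hker := kernelZero hk hpos hfacet c (by
    intro x hx
    rcases classify hk hval hpos hx with ⟨q, rfl⟩ | ⟨pt, ut, vt, rfl, htr⟩
    · rw [Finset.sum_pair (z_addk_ne hk q).symm]
      have hqs : ((a q : ℝ)) + (a (q + (k : ZMod (2 * k))) : ℝ) = (α : ℝ) := by
        exact_mod_cast pair_root_sum hk hx
      by_cases hq : inN k a α q
      · have hq' : ¬ inN k a α (q + (k : ZMod (2 * k))) :=
          fun hcon => not_inN_both hk hval hpos hq hcon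
        rw [hc]
        simp only [if_pos hq, if_neg hq']
        linarith
      · have hq' : inN k a α (q + (k : ZMod (2 * k))) :=
          (inN_or hk hval hpos hfacet q).resolve_left hq
        rw [hc]
        simp only [if_neg hq, if_pos hq']
        linarith
    · obtain ⟨hd1, hd2, hd3⟩ := tr_distinct hk htr
      rw [sum_triple c hd1 hd2 hd3]
      have hts : ((a pt : ℝ)) + (a ut : ℝ) + (a vt : ℝ) = (α : ℝ) := by
        exact_mod_cast htr.2.2.2
      have h1 : inN k a α pt := ⟨pt, ut, vt, htr, Or.inl rfl⟩
      have h2 : inN k a α ut := ⟨pt, ut, vt, htr, Or.inr (Or.inl rfl)⟩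
      have h3 : inN k a α vt := ⟨pt, ut, vt, htr, Or.inr (Or.inr rfl)⟩
      rw [hc]
      simp only [if_pos h1, if_pos h2, if_pos h3]
      linarith)
  intro i hi
  have := hker i
  rw [hc] at this
  simp only [if_pos hi] at this
  linarith

end Main3

end Stmt13Aux

open Stmt13Aux

theorem stmt13 (k : ℕ) (hk : 3 ≤ k)
    (a : ZMod (2 * k) → ℤ) (α : ℤ) (hpos : ∀ i : ZMod (2 * k), 1 ≤ a i)
    (hfacet : IsFacet (2 * k) k a α)
    (hnonbool : ¬ IsBooleanMultiple (2 * k) k a α) :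
    ∃ a0 : ℤ, 1 ≤ a0 ∧ ∃ W : Finset (ZMod (2 * k)),
      (∀ j : ZMod (2 * k), (W ∩ xcov (2 * k) k j).card = 1) ∧
      (∀ j : ZMod (2 * k), 2 ≤ ((Cseg (2 * k) k j).filter (fun l => l ∉ W)).card) ∧
      (∀ i : ZMod (2 * k), a i = if i ∈ W then 2 * a0 else a0) ∧
      α = 3 * a0 := by
  classical
  haveI : NeZero (2 * k) := ⟨by omega⟩
  have hval : IsValid (2 * k) k a α := hfacet.1
  obtain ⟨p0, u0, v0, ht0⟩ := exists_TR hk hval hpos hfacet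
  set a0 : ℤ := a p0 with ha0def
  have hvals := inN_val hk hval hpos hfacet
  have hN0 : inN k a α p0 := ⟨p0, u0, v0, ht0, Or.inl rfl⟩
  have hα3 : α = 3 * a0 := by
    have := hvals p0 hN0
    exact_mod_cast this.symm
  have ha0 : 1 ≤ a0 := hpos p0
  have hNval : ∀ i, inN k a α i → a i = a0 := by
    intro i hi
    have h1 := hvals i hi
    have h2 := hvals p0 hN0
    have : (a i : ℝ) = (a p0 : ℝ) := by linarith
    exact_mod_cast this
  have hpairs := pairs_root hk hval hpos hfacet
  have hWval : ∀ i, ¬ inN k a α i → a i = 2 * a0 := by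
    intro i hi
    have hik : inN k a α (i + (k : ZMod (2 * k))) :=
      (inN_or hk hval hpos hfacet i).resolve_left hi
    have h1 := hNval _ hik
    have h2 := hpairs i
    omega
  set W : Finset (ZMod (2 * k)) := Finset.univ.filter (fun i => ¬ inN k a α i) with hWdef
  have hmemW : ∀ i, i ∈ W ↔ ¬ inN k a α i := by
    intro i
    rw [hWdef, Finset.mem_filter]
    simp
  have hxcov : ∀ j : ZMod (2 * k), xcov (2 * k) k j = {j, j + (k : ZMod (2 * k))} := by
    intro j
    unfold xcov
    have hdiv : (2 * k + k - 1) / k = 2 := by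
      have h1 : 2 * k + k - 1 = k * 2 + (k - 1) := by omega
      rw [h1, Nat.mul_add_div (by omega), Nat.div_eq_of_lt (by omega)]
    rw [hdiv]
    have hr2 : Finset.range 2 = {0, 1} := rfl
    rw [hr2]
    rw [Finset.image_insert, Finset.image_singleton]
    congr 1
    · norm_num
    · congr 1
      norm_num
  refine ⟨a0, ha0, W, ?_, ?_, ?_, hα3⟩
  · -- exactly one element of W in each pair
    intro j
    rw [hxcov j]
    by_cases hj : inN k a α j
    · have hj' : ¬ inN k a α (j + (k : ZMod (2 * k))) :=
        fun hcon => not_inN_both hk hval hpos hj hcon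
      have hset : W ∩ ({j, j + (k : ZMod (2 * k))} : Finset (ZMod (2 * k))) =
          {j + (k : ZMod (2 * k))} := by
        ext i
        simp only [Finset.mem_inter, Finset.mem_insert, Finset.mem_singleton, hmemW]
        constructor
        · rintro ⟨hiW, rfl | rfl⟩
          · exact absurd hj hiW
          · rfl
        · rintro rfl
          exact ⟨hj', Or.inr rfl⟩
      rw [hset, Finset.card_singleton]
    · have hset : W ∩ ({j, j + (k : ZMod (2 * k))} : Finset (ZMod (2 * k))) = {j} := by
        have hj' : inN k a α (j + (k : ZMod (2 * k))) :=
          (inN_or hk hval hpos hfacet j).resolve_left hj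
        ext i
        simp only [Finset.mem_inter, Finset.mem_insert, Finset.mem_singleton, hmemW]
        constructor
        · rintro ⟨hiW, rfl | rfl⟩
          · rfl
          · exact absurd hj' hiW
        · rintro rfl
          exact ⟨hj, Or.inl rfl⟩
      rw [hset, Finset.card_singleton]
  · -- at least two non-W elements in each window
    intro j
    by_contra hcon
    push_neg at hcon
    set F := (Cseg (2 * k) k j).filter (fun l => l ∉ W) with hFdef
    have hFiff : ∀ l, l ∈ F ↔ (l ∈ Cseg (2 * k) k j ∧ inN k a α l) := by
      intro l
      rw [hFdef, Finset.mem_filter, hmemW l, not_not]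
    have ht0cov := tr_cover hk ht0
    obtain ⟨e, he⟩ := ht0cov j
    rw [Finset.mem_inter] at he
    have heN : inN k a α e := ⟨p0, u0, v0, ht0, by simpa using he.1⟩
    have heF : e ∈ F := (hFiff e).mpr ⟨he.2, heN⟩
    have hF1 : F.card = 1 := by
      have h1 : 1 ≤ F.card := Finset.card_pos.mpr ⟨e, heF⟩
      omega
    obtain ⟨m0, hm0⟩ := Finset.card_eq_one.mp hF1
    have hm0F : m0 ∈ F := by rw [hm0]; exact Finset.mem_singleton_self m0
    have hm0N : inN k a α m0 := ((hFiff m0).mp hm0F).2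
    have hm0k : ¬ inN k a α (m0 + (k : ZMod (2 * k))) :=
      fun hcon2 => not_inN_both hk hval hpos hm0N hcon2
    have hm0ne : m0 ≠ m0 + (k : ZMod (2 * k)) := fun hc => z_addk_ne hk m0 hc.symm
    have hall : ∀ p u v, TR k a α p u v → (p = m0 ∨ u = m0 ∨ v = m0) := by
      intro p u v ht
      obtain ⟨e', he'⟩ := tr_cover hk ht j
      rw [Finset.mem_inter] at he'
      have he'N : inN k a α e' := ⟨p, u, v, ht, by simpa using he'.1⟩
      have he'F : e' ∈ F := (hFiff e').mpr ⟨he'.2, he'N⟩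
      have he'm0 : e' = m0 := by rw [hm0] at he'F; exact Finset.mem_singleton.mp he'F
      rcases Finset.mem_insert.mp he'.1 with h | h
      · exact Or.inl (h ▸ he'm0)
      rcases Finset.mem_insert.mp h with h | h
      · exact Or.inr (Or.inl (h ▸ he'm0))
      · exact Or.inr (Or.inr ((Finset.mem_singleton.mp h) ▸ he'm0))
    set c : ZMod (2 * k) → ℝ := fun i =>
      (α : ℝ) * ((if i = m0 then (1:ℝ) else 0) -
        (if i = m0 + (k : ZMod (2 * k)) then 1 else 0)) + 2 * (a i : ℝ) - (α : ℝ) with hcdef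
    have hker := kernelZero hk hpos hfacet c (by
      intro x hx
      rcases classify hk hval hpos hx with ⟨q, rfl⟩ | ⟨pt, ut, vt, rfl, htr⟩
      · rw [Finset.sum_pair (z_addk_ne hk q).symm]
        have hqs : ((a q : ℝ)) + (a (q + (k : ZMod (2 * k))) : ℝ) = (α : ℝ) := by
          exact_mod_cast pair_root_sum hk hx
        have e1 : (q + (k : ZMod (2 * k)) = m0) ↔ (q = m0 + (k : ZMod (2 * k))) := by
          constructor
          · intro h; rw [← h, z_addk_addk]
          · intro h; rw [h, z_addk_addk]
        have e2 : (q + (k : ZMod (2 * k)) = m0 + (k : ZMod (2 * k))) ↔ (q = m0) := by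
          constructor
          · intro h
            have h2 := congrArg (fun z => z + (k : ZMod (2 * k))) h
            simpa [z_addk_addk] using h2
          · intro h; rw [h]
        rw [hcdef]
        simp only [e1, e2]
        linear_combination 2 * hqs
      · obtain ⟨hd1, hd2, hd3⟩ := tr_distinct hk htr
        rw [sum_triple c hd1 hd2 hd3]
        have hts : ((a pt : ℝ)) + (a ut : ℝ) + (a vt : ℝ) = (α : ℝ) := by
          exact_mod_cast htr.2.2.2
        have hno1 : pt ≠ m0 + (k : ZMod (2 * k)) := by
          intro hc; exact hm0k ⟨pt, ut, vt, htr, by rw [← hc]; tauto⟩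
        have hno2 : ut ≠ m0 + (k : ZMod (2 * k)) := by
          intro hc; exact hm0k ⟨pt, ut, vt, htr, by rw [← hc]; tauto⟩
        have hno3 : vt ≠ m0 + (k : ZMod (2 * k)) := by
          intro hc; exact hm0k ⟨pt, ut, vt, htr, by rw [← hc]; tauto⟩
        rw [hcdef]
        dsimp only
        rcases hall pt ut vt htr with h | h | h
        · have hu : ut ≠ m0 := by rw [← h]; exact hd1.symm
          have hv : vt ≠ m0 := by rw [← h]; exact hd3.symm
          rw [if_pos h, if_neg hu, if_neg hv, if_neg hno1, if_neg hno2, if_neg hno3]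
          linear_combination 2 * hts
        · have hp : pt ≠ m0 := by rw [← h]; exact hd1
          have hv : vt ≠ m0 := by rw [← h]; exact hd2.symm
          rw [if_pos h, if_neg hp, if_neg hv, if_neg hno1, if_neg hno2, if_neg hno3]
          linear_combination 2 * hts
        · have hp : pt ≠ m0 := by rw [← h]; exact hd3
          have hu : ut ≠ m0 := by rw [← h]; exact hd2
          rw [if_pos h, if_neg hp, if_neg hu, if_neg hno1, if_neg hno2, if_neg hno3]
          linear_combination 2 * hts)
    have hcm0 := hker m0
    rw [hcdef] at hcm0
    dsimp only at hcm0
    rw [if_pos rfl, if_neg hm0ne] at hcm0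
    have hm0z : (a m0 : ℝ) = 0 := by linarith
    have hm0z' : a m0 = 0 := by exact_mod_cast hm0z
    have := hpos m0
    omega
  · -- values
    intro i
    by_cases hi : inN k a α i
    · rw [if_neg (fun hc => ((hmemW i).mp hc) hi)]
      exact hNval i hi
    · rw [if_pos ((hmemW i).mpr hi)]
      exact hWval i hi
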